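/- Let β > 1, X₀ ≥ 0, and a, A > 0. The equation (1 − β)r² + βX₀r + 1 = −(A/a)(1 + r²)^{1−β/2} has a unique solution r* on [X₀, ∞). Moreover, if β = 2, then r* = X₀ + √(X₀² + 1 + A/a). -/

import Mathlib

open Set

noncomputable def myh (β X₀ a : ℝ) (r : ℝ) : ℝ :=
  a * ((1 - β) * r ^ 2 + β * X₀ * r + 1) * (1 + r ^ 2) ^ (β / 2 - 1)

lemma myh_equiv (β X₀ a A : ℝ) (ha : 0 < a) (r : ℝ) :
    ((1 - β) * r ^ 2 + β * X₀ * r + 1 = -(A / a) * (1 + r ^ 2) ^ (1 - β / 2)) ↔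
      myh β X₀ a r = -A := by
  have hp : (0:ℝ) < 1 + r ^ 2 := by positivity
  have ht : (0:ℝ) < (1 + r ^ 2) ^ (β / 2 - 1) := Real.rpow_pos_of_pos hp _
  have key : (1 + r ^ 2) ^ (1 - β / 2) * (1 + r ^ 2) ^ (β / 2 - 1) = 1 := by
    rw [← Real.rpow_add hp]; norm_num
  have hu : (1 + r ^ 2) ^ (1 - β / 2) = ((1 + r ^ 2) ^ (β / 2 - 1))⁻¹ :=
    eq_inv_of_mul_eq_one_left key
  unfold myh
  rw [hu]
  constructor
  · intro H; rw [H]; field_simp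
  · intro H
    have : ((1 - β) * r ^ 2 + β * X₀ * r + 1) = -A / (a * (1 + r ^ 2) ^ (β / 2 - 1)) := by
      field_simp at H ⊢; linarith
    rw [this]; field_simp

lemma myh_cont (β X₀ a : ℝ) : Continuous (myh β X₀ a) := by
  unfold myh
  apply Continuous.mul
  · continuity
  · exact Continuous.rpow_const (by continuity) (fun x => Or.inl (by positivity))

lemma myh_hasDeriv (β X₀ a : ℝ) (r : ℝ) :
    HasDerivAt (myh β X₀ a)
      (a * ((2 * (1 - β) * r + β * X₀) * (1 + r ^ 2) ^ (β / 2 - 1) +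
        ((1 - β) * r ^ 2 + β * X₀ * r + 1) *
          (2 * r * (β / 2 - 1) * (1 + r ^ 2) ^ (β / 2 - 1 - 1)))) r := by
  have h2 : HasDerivAt (fun x : ℝ => x ^ 2) (2 * r) r := by simpa using hasDerivAt_pow 2 r
  have hQ : HasDerivAt (fun x : ℝ => (1 - β) * x ^ 2 + β * X₀ * x + 1)
      (2 * (1 - β) * r + β * X₀) r := by
    have := ((h2.const_mul (1 - β)).add ((hasDerivAt_id r).const_mul (β * X₀))).add_const 1
    exact this.congr_deriv (by ring)
  have hB : HasDerivAt (fun x : ℝ => 1 + x ^ 2) (2 * r) r := by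
    simpa using h2.const_add 1
  have hg : HasDerivAt (fun x : ℝ => (1 + x ^ 2) ^ (β / 2 - 1))
      (2 * r * (β / 2 - 1) * (1 + r ^ 2) ^ (β / 2 - 1 - 1)) r :=
    hB.rpow_const (Or.inl (by positivity))
  have hfun : myh β X₀ a = fun y =>
      a * (((1 - β) * y ^ 2 + β * X₀ * y + 1) * (1 + y ^ 2) ^ (β / 2 - 1)) := by
    funext y; unfold myh; ring
  rw [hfun]
  exact (hQ.mul hg).const_mul a

lemma myh_anti (β X₀ a : ℝ) (hβ : 1 < β) (ha : 0 < a) :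
    StrictAntiOn (myh β X₀ a) (Ici X₀) := by
  apply strictAntiOn_of_deriv_neg (convex_Ici X₀) (myh_cont β X₀ a).continuousOn
  intro r hr
  rw [interior_Ici] at hr
  rw [(myh_hasDeriv β X₀ a r).deriv]
  have hp : (0:ℝ) < 1 + r ^ 2 := by positivity
  have hsplit : (1 + r ^ 2) ^ (β / 2 - 1) = (1 + r ^ 2) * (1 + r ^ 2) ^ (β / 2 - 1 - 1) := by
    calc (1 + r ^ 2) ^ (β / 2 - 1) = (1 + r ^ 2) ^ ((1:ℝ) + (β / 2 - 1 - 1)) := by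
          congr 1; ring
      _ = (1 + r ^ 2) * (1 + r ^ 2) ^ (β / 2 - 1 - 1) := by
          rw [Real.rpow_add hp, Real.rpow_one]
  rw [hsplit]
  have ht : (0:ℝ) < (1 + r ^ 2) ^ (β / 2 - 1 - 1) := Real.rpow_pos_of_pos hp _
  have hkey : a * ((2 * (1 - β) * r + β * X₀) * ((1 + r ^ 2) * (1 + r ^ 2) ^ (β / 2 - 1 - 1)) +
      ((1 - β) * r ^ 2 + β * X₀ * r + 1) *
        (2 * r * (β / 2 - 1) * (1 + r ^ 2) ^ (β / 2 - 1 - 1))) =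
      -(a * (1 + r ^ 2) ^ (β / 2 - 1 - 1) * (β * (r - X₀) * ((β - 1) * r ^ 2 + 1))) := by
    ring
  rw [hkey]
  have h1 : 0 < β * (r - X₀) * ((β - 1) * r ^ 2 + 1) := by
    have : 0 < r - X₀ := sub_pos.mpr hr
    have h2 : (0:ℝ) < (β - 1) * r ^ 2 + 1 := by nlinarith
    positivity
  nlinarith [mul_pos (mul_pos ha ht) h1]

lemma myh_exists (β X₀ a A : ℝ) (hβ : 1 < β) (hX₀ : 0 ≤ X₀) (ha : 0 < a) (hA : 0 < A) :
    ∃ r ∈ Ici X₀, myh β X₀ a r = -A := by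
  set R : ℝ := max (X₀ + 1) ((a * β * X₀ + a + 2 * A + 1) / (a * (β - 1))) with hRdef
  have hden : 0 < a * (β - 1) := by nlinarith
  have hR1 : X₀ + 1 ≤ R := le_max_left _ _
  have hRge1 : (1:ℝ) ≤ R := by linarith
  have hRX : X₀ ≤ R := by linarith
  have hR2 : a * β * X₀ + a + 2 * A + 1 ≤ a * (β - 1) * R := by
    rw [← div_le_iff₀' hden]
    exact le_max_right _ _
  have hQlt : a * ((1 - β) * R ^ 2 + β * X₀ * R + 1) < -A * (1 + R) := by
    have hmul := mul_le_mul_of_nonneg_right hR2 (le_trans zero_le_one hRge1)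
    nlinarith [hmul, hA.le, ha.le]
  have hp : (0:ℝ) < 1 + R ^ 2 := by positivity
  have hsqle : Real.sqrt (1 + R ^ 2) ≤ 1 + R := by
    have h1 : (1:ℝ) + R ^ 2 ≤ (1 + R) ^ 2 := by nlinarith
    calc Real.sqrt (1 + R ^ 2) ≤ Real.sqrt ((1 + R) ^ 2) := Real.sqrt_le_sqrt h1
      _ = 1 + R := Real.sqrt_sq (by linarith)
  have hsqpos : 0 < Real.sqrt (1 + R ^ 2) := Real.sqrt_pos.mpr hp
  have hrpow : (1 + R ^ 2) ^ (-(1/2) : ℝ) ≤ (1 + R ^ 2) ^ (β / 2 - 1) := by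
    apply (Real.rpow_le_rpow_left_iff (by nlinarith : (1:ℝ) < 1 + R ^ 2)).mpr
    linarith
  have hneg : (1 + R ^ 2) ^ (-(1/2) : ℝ) = (Real.sqrt (1 + R ^ 2))⁻¹ := by
    rw [Real.rpow_neg hp.le, ← Real.sqrt_eq_rpow]
  have hQneg : a * ((1 - β) * R ^ 2 + β * X₀ * R + 1) ≤ 0 := by nlinarith
  have step1 : myh β X₀ a R ≤
      a * ((1 - β) * R ^ 2 + β * X₀ * R + 1) * (Real.sqrt (1 + R ^ 2))⁻¹ := by
    unfold myh
    rw [← hneg]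
    exact mul_le_mul_of_nonpos_left hrpow hQneg
  have step2 : a * ((1 - β) * R ^ 2 + β * X₀ * R + 1) * (Real.sqrt (1 + R ^ 2))⁻¹ ≤
      a * ((1 - β) * R ^ 2 + β * X₀ * R + 1) * (1 + R)⁻¹ := by
    have : (1 + R)⁻¹ ≤ (Real.sqrt (1 + R ^ 2))⁻¹ := inv_anti₀ hsqpos hsqle
    exact mul_le_mul_of_nonpos_left this hQneg
  have step3 : a * ((1 - β) * R ^ 2 + β * X₀ * R + 1) * (1 + R)⁻¹ < -A := by
    rw [← div_eq_mul_inv, div_lt_iff₀ (by linarith : (0:ℝ) < 1 + R)]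
    linarith [hQlt]
  have hmR : myh β X₀ a R ≤ -A := by linarith
  have hmX : -A ≤ myh β X₀ a X₀ := by
    have h0 : myh β X₀ a X₀ = a * (X₀ ^ 2 + 1) * (1 + X₀ ^ 2) ^ (β / 2 - 1) := by
      unfold myh; ring
    have : 0 < a * (X₀ ^ 2 + 1) * (1 + X₀ ^ 2) ^ (β / 2 - 1) := by positivity
    linarith
  have hsub := intermediate_value_Icc' hRX (myh_cont β X₀ a).continuousOn
  obtain ⟨r, hr, hr2⟩ := hsub ⟨hmR, hmX⟩
  exact ⟨r, hr.1, hr2⟩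

/-- For `β > 1`, `X₀ ≥ 0`, `a, A > 0`, the equation
`(1−β)r² + βX₀r + 1 = −(A/a)(1+r²)^{1−β/2}` has a unique solution `r*` on `[X₀, ∞)`,
and if `β = 2` then `r* = X₀ + √(X₀² + 1 + A/a)`. -/
theorem stmt_16 (β X₀ a A : ℝ) (hβ : 1 < β) (hX₀ : 0 ≤ X₀) (ha : 0 < a) (hA : 0 < A) :
    (∃! r : ℝ, X₀ ≤ r ∧
      (1 - β) * r ^ 2 + β * X₀ * r + 1 = -(A / a) * (1 + r ^ 2) ^ (1 - β / 2)) ∧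
    (β = 2 → ∀ r : ℝ, (X₀ ≤ r ∧
        (1 - β) * r ^ 2 + β * X₀ * r + 1 = -(A / a) * (1 + r ^ 2) ^ (1 - β / 2)) →
      r = X₀ + Real.sqrt (X₀ ^ 2 + 1 + A / a)) := by
  constructor
  · obtain ⟨r, hrmem, hrval⟩ := myh_exists β X₀ a A hβ hX₀ ha hA
    refine ⟨r, ⟨hrmem, (myh_equiv β X₀ a A ha r).mpr hrval⟩, ?_⟩
    rintro s ⟨hs1, hs2⟩
    exact (myh_anti β X₀ a hβ ha).injOn hs1 hrmem
      (by rw [(myh_equiv β X₀ a A ha s).mp hs2, hrval])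
  · rintro hb2 r ⟨hr1, hr2⟩
    subst hb2
    norm_num at hr2
    have key : X₀ ^ 2 + 1 + A / a = (r - X₀) ^ 2 := by nlinarith [hr2]
    rw [key, Real.sqrt_sq (sub_nonneg.mpr hr1)]
    ring
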